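/- Conservation law of the s-dynamics for the discrete Liouville equation: let φ, φ̄ : ℤ → ℂ and let T : ℤ² → ℂ (written T_s(u)) be nowhere zero and satisfy T_s(u+1)·T_s(u−1) − T_{s+1}(u)·T_{s−1}(u) = φ(u+s)·φ̄(u−s) for all s, u ∈ ℤ. Define A_s(u) := (φ(u−2)·T_{s+1}(u−s) + φ(u)·T_{s−1}(u−s−2)) / T_s(u−s−1). Then A_s(u) is independent of s: A_s(u) = A_{s'}(u) for all s, s', u ∈ ℤ. -/

import Mathlib

/-- **Conservation law of the `s`-dynamics for the discrete Liouville equation.**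
Let `T` be nowhere zero and satisfy
`T_s(u+1)·T_s(u−1) − T_{s+1}(u)·T_{s−1}(u) = φ(u+s)·φ̄(u−s)`.  Then
`A_s(u) = (φ(u−2)·T_{s+1}(u−s) + φ(u)·T_{s−1}(u−s−2))/T_s(u−s−1)` is independent of `s`. -/
theorem discrete_liouville_conservation (φ φb : ℤ → ℂ) (T : ℤ → ℤ → ℂ)
    (hnz : ∀ s u : ℤ, T s u ≠ 0)
    (hT : ∀ s u : ℤ,
      T s (u+1) * T s (u-1) - T (s+1) u * T (s-1) u = φ (u+s) * φb (u-s))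
    (A : ℤ → ℤ → ℂ)
    (hA : ∀ s u : ℤ,
      A s u = (φ (u-2) * T (s+1) (u-s) + φ u * T (s-1) (u-s-2)) / T s (u-s-1)) :
    ∀ s s' u : ℤ, A s u = A s' u := by
  have step : ∀ s u : ℤ, A (s+1) u = A s u := by
    intro s u
    have h1 := hT (s+1) (u-s-1)
    have h2 := hT s (u-s-2)
    simp only [show u-s-1+1 = u-s from by ring, show u-s-1-1 = u-s-2 from by ring,
      show s+1+1 = s+2 from by ring, show s+1-1 = s from by ring,
      show u-s-1+(s+1) = u from by ring, show u-s-1-(s+1) = u-2*s-2 from by ring] at h1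
    simp only [show u-s-2+1 = u-s-1 from by ring, show u-s-2-1 = u-s-3 from by ring,
      show u-s-2+s = u-2 from by ring, show u-s-2-s = u-2*s-2 from by ring] at h2
    rw [hA (s+1) u, hA s u, div_eq_div_iff (hnz _ _) (hnz _ _)]
    simp only [show s+1+1 = s+2 from by ring, show s+1-1 = s from by ring,
      show u-(s+1) = u-s-1 from by ring, show u-(s+1)-2 = u-s-3 from by ring,
      show u-(s+1)-1 = u-s-2 from by ring,
      show u-s-1-1 = u-s-2 from by ring, show u-s-1-2 = u-s-3 from by ring]
    linear_combination φ u * h2 - φ (u-2) * h1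
  intro s s' u
  have base : ∀ t : ℤ, A t u = A 0 u := by
    intro t
    induction t using Int.induction_on with
    | zero => rfl
    | succ n ih => rw [step n u]; exact ih
    | pred n ih =>
        have := step (-(n:ℤ)-1) u
        simp only [show -(n:ℤ)-1+1 = -n from by ring] at this
        rw [← this]; exact ih
  rw [base s, base s']
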